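/- Let n ≥ 2 be a natural number and let K be a natural number with (K : ℝ) ≤ 2^{n/4} (real exponent). Then, as real numbers, the sum over j from 2 to K of (j − 1) / (2^{2n} − 1 − (j − 1)(j − 2)/2) is at most 2^{−1.4·n} (real power). In particular each denominator in the sum is positive. -/

import Mathlib

private lemma key_ineq (x : ℝ) (hx : 2 ≤ x) :
    (2 : ℝ) ^ ((1.4 : ℝ) * x) + 1 ≤ (2 : ℝ) ^ ((1.5 : ℝ) * x) := by
  have h2 : (0 : ℝ) < 2 := by norm_num
  have h28 : (2 : ℝ) ^ ((2.8 : ℝ)) ≤ 7 := by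
    have h5 : ((2 : ℝ) ^ ((2.8 : ℝ))) ^ (5 : ℕ) ≤ 7 ^ (5 : ℕ) := by
      rw [← Real.rpow_natCast ((2:ℝ) ^ (2.8:ℝ)) 5, ← Real.rpow_mul (by norm_num)]
      norm_num
    exact le_of_pow_le_pow_left₀ (by norm_num) (by norm_num) h5
  have ha : (2 : ℝ) ^ ((2.8 : ℝ)) ≤ (2 : ℝ) ^ ((1.4 : ℝ) * x) :=
    Real.rpow_le_rpow_left_iff (by norm_num) |>.mpr (by nlinarith)
  have hb : (2 : ℝ) ^ ((0.2 : ℝ)) ≤ (2 : ℝ) ^ ((0.1 : ℝ) * x) :=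
    Real.rpow_le_rpow_left_iff (by norm_num) |>.mpr (by nlinarith)
  have hprod : ((2:ℝ) ^ ((2.8:ℝ))) * ((2:ℝ) ^ ((0.2:ℝ)) - 1)
      ≤ ((2:ℝ) ^ ((1.4:ℝ) * x)) * ((2:ℝ) ^ ((0.1:ℝ) * x) - 1) := by
    have hpos : (0:ℝ) ≤ (2:ℝ) ^ ((2.8:ℝ)) := (Real.rpow_pos_of_pos h2 _).le
    have hb0 : (0:ℝ) ≤ (2:ℝ) ^ ((0.2:ℝ)) - 1 := by
      have : (2:ℝ) ^ ((0:ℝ)) ≤ (2:ℝ) ^ ((0.2:ℝ)) :=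
        Real.rpow_le_rpow_left_iff (by norm_num) |>.mpr (by norm_num)
      simpa using this
    exact mul_le_mul ha (by linarith) hb0 (Real.rpow_pos_of_pos h2 _).le
  have hsplit : ((2:ℝ) ^ ((2.8:ℝ))) * ((2:ℝ) ^ ((0.2:ℝ)) - 1)
      = (2:ℝ) ^ ((3:ℝ)) - (2:ℝ) ^ ((2.8:ℝ)) := by
    rw [mul_sub, ← Real.rpow_add h2]; norm_num
  have hsplit2 : ((2:ℝ) ^ ((1.4:ℝ) * x)) * ((2:ℝ) ^ ((0.1:ℝ) * x) - 1)
      = (2:ℝ) ^ ((1.5:ℝ) * x) - (2:ℝ) ^ ((1.4:ℝ) * x) := by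
    rw [mul_sub, ← Real.rpow_add h2, mul_one]; ring_nf
  have h3 : (2:ℝ) ^ ((3:ℝ)) = 8 := by
    rw [show (3:ℝ) = ((3:ℕ):ℝ) by norm_num, Real.rpow_natCast]; norm_num
  rw [hsplit, hsplit2, h3] at hprod
  linarith

theorem collision_sum_estimate (n : ℕ) (hn : 2 ≤ n) (K : ℕ)
    (hK : (K : ℝ) ≤ (2 : ℝ) ^ ((n : ℝ) / 4)) :
    (∀ j ∈ Finset.Icc 2 K,
        (0 : ℝ) < (2 : ℝ) ^ (2 * n) - 1 - ((j : ℝ) - 1) * ((j : ℝ) - 2) / 2) ∧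
    ∑ j ∈ Finset.Icc 2 K,
        ((j : ℝ) - 1) / ((2 : ℝ) ^ (2 * n) - 1 - ((j : ℝ) - 1) * ((j : ℝ) - 2) / 2)
      ≤ (2 : ℝ) ^ (-(1.4) * (n : ℝ)) := by
  have h2 : (0 : ℝ) < 2 := by norm_num
  set x : ℝ := (n : ℝ) with hxdef
  have hx2 : (2 : ℝ) ≤ x := by rw [hxdef]; exact_mod_cast hn
  set A : ℝ := (2 : ℝ) ^ (x / 4) with hAdef
  have hApos : 0 < A := Real.rpow_pos_of_pos h2 _
  have hpow : (2 : ℝ) ^ (2 * n) = (2 : ℝ) ^ ((2 : ℝ) * x) := by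
    rw [← Real.rpow_natCast 2 (2 * n)]; push_cast; ring_nf; rfl
  have hAA : A * A = (2 : ℝ) ^ (x / 2) := by
    rw [hAdef, ← Real.rpow_add h2]; ring_nf
  set B : ℝ := (2 : ℝ) ^ ((2 : ℝ) * x) - (2 : ℝ) ^ (x / 2) with hBdef
  have hBpos : 0 < B := by
    have : (2 : ℝ) ^ (x / 2) < (2 : ℝ) ^ ((2 : ℝ) * x) :=
      Real.rpow_lt_rpow_left_iff (by norm_num) |>.mpr (by linarith)
    simpa [hBdef, sub_pos] using this
  have h2half : (2 : ℝ) ≤ (2 : ℝ) ^ (x / 2) := by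
    have : (2 : ℝ) ^ ((1 : ℝ)) ≤ (2 : ℝ) ^ (x / 2) :=
      Real.rpow_le_rpow_left_iff (by norm_num) |>.mpr (by linarith)
    simpa using this
  have hD : ∀ j ∈ Finset.Icc 2 K,
      B ≤ (2 : ℝ) ^ (2 * n) - 1 - ((j : ℝ) - 1) * ((j : ℝ) - 2) / 2 := by
    intro j hj
    rw [Finset.mem_Icc] at hj
    have hj2 : (2 : ℝ) ≤ (j : ℝ) := by exact_mod_cast hj.1
    have hjA : (j : ℝ) ≤ A := le_trans (by exact_mod_cast hj.2) hK
    have hq : ((j : ℝ) - 1) * ((j : ℝ) - 2) ≤ A * A :=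
      mul_le_mul (by linarith) (by linarith) (by linarith) (by linarith)
    rw [hAA] at hq
    rw [hpow, hBdef]
    nlinarith [h2half]
  have hApos' : (0 : ℝ) ≤ A := hApos.le
  constructor
  · intro j hj
    exact lt_of_lt_of_le hBpos (hD j hj)
  · have hterm : ∀ j ∈ Finset.Icc 2 K,
        ((j : ℝ) - 1) / ((2 : ℝ) ^ (2 * n) - 1 - ((j : ℝ) - 1) * ((j : ℝ) - 2) / 2)
          ≤ A / B := by
      intro j hj
      have hjA : (j : ℝ) ≤ A :=
        le_trans (by exact_mod_cast (Finset.mem_Icc.mp hj).2) hK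
      exact div_le_div₀ hApos' (by linarith) hBpos (hD j hj)
    have hsum := Finset.sum_le_card_nsmul (Finset.Icc 2 K) _ (A / B) hterm
    have hcard : ((Finset.Icc 2 K).card : ℝ) ≤ A := by
      have : (Finset.Icc 2 K).card ≤ K := by
        rw [Nat.card_Icc]; omega
      exact le_trans (by exact_mod_cast this) hK
    have hABpos : (0 : ℝ) ≤ A / B := div_nonneg hApos' hBpos.le
    have hsum2 : ∑ j ∈ Finset.Icc 2 K,
        ((j : ℝ) - 1) / ((2 : ℝ) ^ (2 * n) - 1 - ((j : ℝ) - 1) * ((j : ℝ) - 2) / 2)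
          ≤ A * (A / B) := by
      calc _ ≤ ((Finset.Icc 2 K).card : ℝ) * (A / B) := by
              simpa [nsmul_eq_mul] using hsum
        _ ≤ A * (A / B) := mul_le_mul_of_nonneg_right hcard hABpos
    have hAAB : A * (A / B) = (2 : ℝ) ^ (x / 2) / B := by
      rw [← hAA]; ring
    refine le_trans hsum2 ?_
    rw [hAAB, div_le_iff₀ hBpos]
    have key := key_ineq x hx2
    have hc : (0 : ℝ) < (2 : ℝ) ^ (-(0.9 : ℝ) * x) := Real.rpow_pos_of_pos h2 _
    have hkey2 : (2 : ℝ) ^ (x / 2) + (2 : ℝ) ^ (-(0.9 : ℝ) * x)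
        ≤ (2 : ℝ) ^ ((0.6 : ℝ) * x) := by
      have := mul_le_mul_of_nonneg_right key hc.le
      rw [add_mul, one_mul, ← Real.rpow_add h2, ← Real.rpow_add h2] at this
      have e1 : (1.4 : ℝ) * x + -(0.9 : ℝ) * x = x / 2 := by ring
      have e2 : (1.5 : ℝ) * x + -(0.9 : ℝ) * x = (0.6 : ℝ) * x := by ring
      rw [e1, e2] at this
      linarith
    have hexp : (2 : ℝ) ^ (-(1.4) * x) * B
        = (2 : ℝ) ^ ((0.6 : ℝ) * x) - (2 : ℝ) ^ (-(0.9 : ℝ) * x) := by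
      rw [hBdef, mul_sub, ← Real.rpow_add h2, ← Real.rpow_add h2,
        show -(1.4 : ℝ) * x + 2 * x = (0.6 : ℝ) * x by ring,
        show -(1.4 : ℝ) * x + x / 2 = -(0.9 : ℝ) * x by ring]
    rw [hexp]
    linarith
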